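/- Let τ, τ' ∈ ℍ and μ ∈ M₂(ℝ) with τ'(τ,1)ᵗ = μ(τ,1)ᵗ. Let ρ: ℤτ' + ℤ → GL₃(ℂ) be given by ρ(mτ'+n) = ((1,0,0),(0,1,0),(−mμ₁₁−n, −mμ₂₁, 1)). Then the space of holomorphic maps f = (f₁,f₂,f₃): ℂ → ℂ³ satisfying f(z + mτ' + n) = ρ(mτ'+n)·f(z) for all m,n ∈ ℤ is exactly 2-dimensional: it consists of all f of the form (f₁, f₂, −f₁ z + b) where b ∈ ℂ and (f₁,f₂)ᵗ is an eigenvector (possibly zero) of μᵗ with eigenvalue τ'. -/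

import Mathlib

open Set Bornology

lemma const_of_doubly_periodic (τ' : ℂ) (hτ' : 0 < τ'.im) (g : ℂ → ℂ)
    (hg : Differentiable ℂ g)
    (hp : ∀ m n : ℤ, ∀ z : ℂ, g (z + m * τ' + n) = g z) :
    ∀ z w : ℂ, g z = g w := by
  have hK : IsCompact ((fun p : ℝ × ℝ => (p.1 : ℂ) * τ' + (p.2 : ℂ)) ''
      (Icc (0:ℝ) 1 ×ˢ Icc (0:ℝ) 1)) :=
    (isCompact_Icc.prod isCompact_Icc).image (by fun_prop)
  set K := (fun p : ℝ × ℝ => (p.1 : ℂ) * τ' + (p.2 : ℂ)) '' (Icc (0:ℝ) 1 ×ˢ Icc (0:ℝ) 1)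
  have key : ∀ z : ℂ, ∃ w ∈ K, g z = g w := by
    intro z
    set a : ℝ := z.im / τ'.im with ha
    set b : ℝ := z.re - a * τ'.re with hb
    have hz : z = (a : ℂ) * τ' + (b : ℂ) := by
      apply Complex.ext <;> simp [hb] <;> field_simp [ha, hτ'.ne'] <;> rw [ha, div_mul_cancel₀ _ hτ'.ne']
    refine ⟨z - (⌊a⌋ : ℂ) * τ' - (⌊b⌋ : ℂ), ⟨(Int.fract a, Int.fract b),
      ⟨⟨Int.fract_nonneg _, (Int.fract_lt_one _).le⟩,
        ⟨Int.fract_nonneg _, (Int.fract_lt_one _).le⟩⟩, ?_⟩, ?_⟩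
    · simp only [Int.fract]
      push_cast
      rw [hz]; ring
    · have := hp ⌊a⌋ ⌊b⌋ (z - (⌊a⌋ : ℂ) * τ' - (⌊b⌋ : ℂ))
      rw [show z - (⌊a⌋ : ℂ) * τ' - (⌊b⌋ : ℂ) + (⌊a⌋ : ℂ) * τ' + (⌊b⌋ : ℂ) = z by ring] at this
      exact this
  have hbd : IsBounded (range g) := by
    refine ((hK.image hg.continuous).isBounded).subset ?_
    rintro - ⟨z, rfl⟩
    obtain ⟨w, hw, hgz⟩ := key z
    exact hgz ▸ Set.mem_image_of_mem g hw
  intro z w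
  exact hg.apply_eq_apply_of_bounded hbd z w

def SatisfiesRho (τ' : ℂ) (μ : Matrix (Fin 2) (Fin 2) ℝ) (f : ℂ → ℂ × ℂ × ℂ) : Prop :=
  Differentiable ℂ f ∧ ∀ m n : ℤ, ∀ z : ℂ,
    (f (z + m * τ' + n)).1 = (f z).1 ∧
    (f (z + m * τ' + n)).2.1 = (f z).2.1 ∧
    (f (z + m * τ' + n)).2.2
      = -((m : ℂ) * (μ 0 0 : ℂ) + (n : ℂ)) * (f z).1
        - (m : ℂ) * (μ 1 0 : ℂ) * (f z).2.1 + (f z).2.2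

theorem sections_on_elliptic_curve_in_fiber
    (μ : Matrix (Fin 2) (Fin 2) ℝ) (τ τ' : ℂ)
    (hτ : 0 < τ.im) (hτ' : 0 < τ'.im)
    (h1 : (μ 0 0 : ℂ) * τ + (μ 0 1 : ℂ) = τ' * τ)
    (h2 : (μ 1 0 : ℂ) * τ + (μ 1 1 : ℂ) = τ') :
    (∀ f : ℂ → ℂ × ℂ × ℂ, SatisfiesRho τ' μ f ↔
      ∃ c₁ c₂ b : ℂ,
        ((μ 0 0 : ℂ) * c₁ + (μ 1 0 : ℂ) * c₂ = τ' * c₁ ∧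
         (μ 0 1 : ℂ) * c₁ + (μ 1 1 : ℂ) * c₂ = τ' * c₂) ∧
        ∀ z : ℂ, f z = (c₁, c₂, -c₁ * z + b)) ∧
    (∃ g₁ g₂ : ℂ → ℂ × ℂ × ℂ,
      SatisfiesRho τ' μ g₁ ∧ SatisfiesRho τ' μ g₂ ∧
      LinearIndependent ℂ ![g₁, g₂] ∧
      ∀ f, SatisfiesRho τ' μ f → ∃ a b : ℂ, f = a • g₁ + b • g₂) := by
  have part1 : ∀ f : ℂ → ℂ × ℂ × ℂ, SatisfiesRho τ' μ f ↔
      ∃ c₁ c₂ b : ℂ,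
        ((μ 0 0 : ℂ) * c₁ + (μ 1 0 : ℂ) * c₂ = τ' * c₁ ∧
         (μ 0 1 : ℂ) * c₁ + (μ 1 1 : ℂ) * c₂ = τ' * c₂) ∧
        ∀ z : ℂ, f z = (c₁, c₂, -c₁ * z + b) := by
    intro f
    constructor
    · rintro ⟨hd, hper⟩
      set c₁ : ℂ := (f 0).1 with hc₁
      set c₂ : ℂ := (f 0).2.1 with hc₂
      have hc1 : ∀ z : ℂ, (f z).1 = c₁ := fun z =>
        const_of_doubly_periodic τ' hτ' _ hd.fst (fun m n z => (hper m n z).1) z 0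
      have hc2 : ∀ z : ℂ, (f z).2.1 = c₂ := fun z =>
        const_of_doubly_periodic τ' hτ' _ hd.snd.fst (fun m n z => (hper m n z).2.1) z 0
      set K : ℂ := τ' * c₁ - (μ 0 0 : ℂ) * c₁ - (μ 1 0 : ℂ) * c₂ with hKdef
      set g : ℂ → ℂ := fun z => (f z).2.2 + c₁ * z with hgdef
      have hdg : Differentiable ℂ g := hd.snd.snd.add (by fun_prop)
      have hgK : ∀ m n : ℤ, ∀ z : ℂ, g (z + m * τ' + n) = g z + m * K := by
        intro m n z
        simp only [hgdef]
        rw [(hper m n z).2.2, hc1 z, hc2 z, hKdef]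
        ring
      have hdg' : Differentiable ℂ (deriv g) :=
        Complex.analyticOnNhd_univ_iff_differentiable.mp
          ((Complex.analyticOnNhd_univ_iff_differentiable.mpr hdg).deriv)
      have hper' : ∀ m n : ℤ, ∀ z : ℂ, deriv g (z + m * τ' + n) = deriv g z := by
        intro m n z
        have hfe : (fun x => g (x + ((m : ℂ) * τ' + n))) = fun x => g x + m * K :=
          funext fun x => by rw [← add_assoc]; exact hgK m n x
        calc deriv g (z + m * τ' + n)
            = deriv (fun x => g (x + ((m : ℂ) * τ' + n))) z := by
              rw [deriv_comp_add_const, add_assoc]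
          _ = deriv g z := by rw [hfe, deriv_add_const]
      have hdc : ∀ z w : ℂ, deriv g z = deriv g w :=
        const_of_doubly_periodic τ' hτ' _ hdg' hper'
      set d : ℂ := deriv g 0 with hd0
      have hconst : ∀ z w : ℂ, g z - d * z = g w - d * w := by
        apply is_const_of_deriv_eq_zero (hdg.sub (by fun_prop))
        intro z
        rw [deriv_sub (hdg z) (by fun_prop)]
        have : deriv (fun z : ℂ => d * z) z = d := by
          simpa using ((hasDerivAt_id z).const_mul d).deriv
        rw [this, hdc z 0, hd0]
        exact sub_self _
      have hgz : ∀ z : ℂ, g z = d * z + (g 0) := by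
        intro z
        have := hconst z 0
        simp only [mul_zero, sub_zero] at this
        linear_combination this
      have hd01 : d = 0 := by
        have e := hgK 0 1 0
        push_cast at e
        simp only [zero_mul, add_zero, zero_add] at e
        rw [hgz 1] at e
        linear_combination e
      have hK0 : K = 0 := by
        have e := hgK 1 0 0
        push_cast at e
        simp only [one_mul, add_zero, zero_add] at e
        rw [hgz τ', hd01] at e
        linear_combination -e
      rw [hKdef] at hK0
      have e1 : (μ 0 0 : ℂ) * c₁ + (μ 1 0 : ℂ) * c₂ = τ' * c₁ := by linear_combination -hK0
      refine ⟨c₁, c₂, g 0, ⟨e1, by linear_combination c₁ * h1 + c₂ * h2 - τ * e1⟩, ?_⟩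
      intro z
      have h3 : (f z).2.2 = -c₁ * z + g 0 := by
        have hz := hgz z
        rw [hd01] at hz
        simp only [hgdef] at hz
        linear_combination hz
      exact Prod.ext (hc1 z) (Prod.ext (hc2 z) h3)
    · rintro ⟨c₁, c₂, b, ⟨e1, e2⟩, hf⟩
      have hfe : f = fun z => (c₁, c₂, -c₁ * z + b) := funext hf
      constructor
      · rw [hfe]; fun_prop
      · intro m n z
        rw [hf, hf]
        refine ⟨rfl, rfl, ?_⟩
        simp only
        linear_combination (m : ℂ) * e1
  refine ⟨part1, ?_⟩
  have hμ10 : (μ 1 0 : ℂ) ≠ 0 := by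
    intro h0
    have hτ'' : τ' = ((μ 1 1 : ℝ) : ℂ) := by rw [← h2, h0]; ring
    rw [hτ''] at hτ'
    simp at hτ'
  set g₁ : ℂ → ℂ × ℂ × ℂ :=
    fun z => ((μ 1 0 : ℂ), τ' - (μ 0 0 : ℂ), -(μ 1 0 : ℂ) * z + 0) with hg₁
  set g₂ : ℂ → ℂ × ℂ × ℂ := fun z => ((0:ℂ), (0:ℂ), -(0:ℂ) * z + 1) with hg₂
  have ee1 : (μ 0 0 : ℂ) * (μ 1 0 : ℂ) + (μ 1 0 : ℂ) * (τ' - (μ 0 0 : ℂ))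
      = τ' * (μ 1 0 : ℂ) := by ring
  have ee2 : (μ 0 1 : ℂ) * (μ 1 0 : ℂ) + (μ 1 1 : ℂ) * (τ' - (μ 0 0 : ℂ))
      = τ' * (τ' - (μ 0 0 : ℂ)) := by
    linear_combination (μ 1 0 : ℂ) * h1 + (τ' - (μ 0 0 : ℂ)) * h2
  have hs1 : SatisfiesRho τ' μ g₁ :=
    (part1 g₁).mpr ⟨(μ 1 0 : ℂ), τ' - (μ 0 0 : ℂ), 0, ⟨ee1, ee2⟩, fun z => rfl⟩
  have hs2 : SatisfiesRho τ' μ g₂ :=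
    (part1 g₂).mpr ⟨0, 0, 1, ⟨by ring, by ring⟩, fun z => rfl⟩
  refine ⟨g₁, g₂, hs1, hs2, ?_, ?_⟩
  · rw [linearIndependent_fin2]
    constructor
    · intro h
      have := congrFun h 0
      rw [hg₂] at this
      simp [Prod.ext_iff] at this
    · intro a h
      simp only [Matrix.cons_val_one, Matrix.head_cons, Matrix.cons_val_zero] at h
      have := congrFun h 0
      rw [hg₁, hg₂] at this
      simp only [Pi.smul_apply, Prod.smul_mk, smul_eq_mul, mul_zero, Prod.mk.injEq] at this
      exact hμ10 this.1.symm
  · intro f hf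
    obtain ⟨c₁, c₂, b, ⟨e1, e2⟩, hfz⟩ := (part1 f).mp hf
    refine ⟨c₁ / (μ 1 0 : ℂ), b, ?_⟩
    funext z
    rw [Pi.add_apply, Pi.smul_apply, Pi.smul_apply, hfz z, hg₁, hg₂]
    simp only [Prod.smul_mk, smul_eq_mul, Prod.mk_add_mk]
    refine Prod.ext ?_ (Prod.ext ?_ ?_) <;> simp only
    · field_simp; ring
    · field_simp
      linear_combination e1
    · field_simp
      ring
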